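/- The Gumbel-Max trick: if g_1, ..., g_K are i.i.d. standard Gumbel random variables (CDF F(x) = exp(−exp(−x))) and p ∈ ℝ^K is a probability vector with all p_k > 0, then the probability that log p_k + g_k is the unique maximum of {log p_i + g_i}_{i=1}^K equals p_k. -/

import Mathlib

open MeasureTheory
open Real Set Filter Topology

noncomputable def gF (a : ℝ) : ℝ → ℝ := fun x => a⁻¹ * Real.exp (-a * Real.exp (-x))
noncomputable def gf (a : ℝ) : ℝ → ℝ := fun x => Real.exp (-x) * Real.exp (-a * Real.exp (-x))

lemma gf_deriv (a : ℝ) (ha : a ≠ 0) (x : ℝ) : HasDerivAt (gF a) (gf a x) x := by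
  have h1 : HasDerivAt (fun x : ℝ => -x) (-1) x := (hasDerivAt_id x).neg
  have h2 : HasDerivAt (fun x : ℝ => Real.exp (-x)) (Real.exp (-x) * (-1)) x := h1.exp
  have h3 := (h2.const_mul (-a)).exp.const_mul a⁻¹
  refine h3.congr_deriv ?_
  unfold gf; field_simp

lemma gF_top (a : ℝ) : Tendsto (gF a) atTop (𝓝 a⁻¹) := by
  have t1 : Tendsto (fun x : ℝ => Real.exp (-x)) atTop (𝓝 0) :=
    Real.tendsto_exp_atBot.comp tendsto_neg_atTop_atBot
  have t2 : Tendsto (fun x : ℝ => -a * Real.exp (-x)) atTop (𝓝 (-a * 0)) := t1.const_mul _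
  have t3 := (Real.continuous_exp.tendsto (-a * 0)).comp t2
  have t4 := t3.const_mul a⁻¹
  simp only [mul_zero, neg_zero, Real.exp_zero, mul_one] at t4
  exact t4

lemma gF_bot (a : ℝ) (ha : 0 < a) : Tendsto (gF a) atBot (𝓝 0) := by
  have t1 : Tendsto (fun x : ℝ => Real.exp (-x)) atBot atTop :=
    Real.tendsto_exp_atTop.comp tendsto_neg_atBot_atTop
  have t2 : Tendsto (fun x : ℝ => -a * Real.exp (-x)) atBot atBot :=
    t1.const_mul_atTop_of_neg (by linarith)
  have t3 := Real.tendsto_exp_atBot.comp t2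
  have t4 := t3.const_mul a⁻¹
  simp only [mul_zero] at t4
  exact t4

lemma gf_nonneg (a x : ℝ) : 0 ≤ gf a x := by
  unfold gf; positivity

lemma gf_integrable (a : ℝ) (ha : 0 < a) : Integrable (gf a) := by
  have hIoi : IntegrableOn (gf a) (Ioi 0) :=
    integrableOn_Ioi_deriv_of_nonneg' (fun x _ => gf_deriv a ha.ne' x)
      (fun x _ => gf_nonneg a x) (gF_top a)
  have hneg : ∀ x ∈ Ici (0:ℝ), HasDerivAt (fun x => gF a (-x)) (-(gf a (-x))) x := by
    intro x _
    have := (gf_deriv a ha.ne' (-x)).comp x (hasDerivAt_neg x)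
    simpa [mul_comm, Function.comp_def] using this
  have I1 : IntegrableOn (fun x => -(gf a (-x))) (Ioi 0) :=
    integrableOn_Ioi_deriv_of_nonpos' hneg
      (fun x _ => neg_nonpos.2 (gf_nonneg a _))
      ((gF_bot a ha).comp tendsto_neg_atTop_atBot)
  have I2 : IntegrableOn (gf a ∘ Neg.neg) (Ioi 0) := by
    have hfun : (fun x => -(gf a (-x))) = -(fun x => gf a (-x)) := rfl
    rw [hfun] at I1
    exact integrable_neg_iff.1 I1
  have I3 : IntegrableOn (gf a) (Iio 0) := by
    apply (MeasurePreserving.integrableOn_comp_preimage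
      (Measure.measurePreserving_neg (volume : Measure ℝ))
      (Homeomorph.neg ℝ).measurableEmbedding (f := gf a) (s := Iio 0)).1
    have hs : (Neg.neg : ℝ → ℝ) ⁻¹' Iio 0 = Ioi 0 := by ext x; simp
    rw [hs]; exact I2
  have I4 : IntegrableOn (gf a) (Ici 0) := by
    rwa [integrableOn_Ici_iff_integrableOn_Ioi]
  have := I3.union I4
  rwa [Iio_union_Ici, integrableOn_univ] at this

lemma gf_integral (a : ℝ) (ha : 0 < a) : ∫ x, gf a x = a⁻¹ := by
  have := integral_of_hasDerivAt_of_tendsto (fun x => gf_deriv a ha.ne' x)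
    (gf_integrable a ha) (gF_bot a ha) (gF_top a)
  simpa using this

/-- The standard Gumbel distribution, as a measure on `ℝ` with Lebesgue
density `e^(−x) · exp(−e^(−x))`. -/
noncomputable def stdGumbel : Measure ℝ :=
  volume.withDensity
    (fun x => ENNReal.ofReal (Real.exp (-x) * Real.exp (-Real.exp (-x))))

lemma gf_one (x : ℝ) : Real.exp (-x) * Real.exp (-Real.exp (-x)) = gf 1 x := by
  simp [gf]

lemma gf_meas (a : ℝ) : Measurable (gf a) := by
  unfold gf; fun_prop

lemma gf_integral_Iic (a : ℝ) (ha : 0 < a) (t : ℝ) :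
    ∫ x in Iic t, gf a x = a⁻¹ * Real.exp (-a * Real.exp (-t)) := by
  have h := integral_Iic_of_hasDerivAt_of_tendsto' (a := t)
    (fun x _ => gf_deriv a ha.ne' x) ((gf_integrable a ha).integrableOn) (gF_bot a ha)
  simp only [gF, sub_zero] at h
  exact h

lemma stdGumbel_Iio (t : ℝ) :
    stdGumbel (Iio t) = ENNReal.ofReal (Real.exp (-Real.exp (-t))) := by
  rw [stdGumbel, withDensity_apply _ measurableSet_Iio]
  have h1 : ∫⁻ x in Iio t, ENNReal.ofReal (Real.exp (-x) * Real.exp (-Real.exp (-x)))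
      = ∫⁻ x in Iio t, ENNReal.ofReal (gf 1 x) := by
    simp only [gf_one]
  rw [h1, ← ofReal_integral_eq_lintegral_ofReal
    ((gf_integrable 1 one_pos).integrableOn) (ae_of_all _ (fun x => gf_nonneg 1 x)),
    ← integral_Iic_eq_integral_Iio, gf_integral_Iic 1 one_pos]
  norm_num

instance : IsProbabilityMeasure stdGumbel := by
  constructor
  rw [stdGumbel, withDensity_apply _ MeasurableSet.univ, Measure.restrict_univ]
  have h1 : ∫⁻ x, ENNReal.ofReal (Real.exp (-x) * Real.exp (-Real.exp (-x)))
      = ∫⁻ x, ENNReal.ofReal (gf 1 x) := by simp only [gf_one]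
  rw [h1, ← ofReal_integral_eq_lintegral_ofReal (gf_integrable 1 one_pos)
    (ae_of_all _ (fun x => gf_nonneg 1 x)), gf_integral 1 one_pos]
  norm_num

/-- The Gumbel-Max trick: with i.i.d. standard Gumbel noise `g_i`, the
probability that `log p_k + g_k` is the unique maximum of the perturbed
log-probabilities equals `p_k`. -/
theorem gumbel_max_trick (K : ℕ) (p : Fin K → ℝ)
    (hp : ∀ i, 0 < p i) (hsum : ∑ i, p i = 1) (k : Fin K) :
    (Measure.pi fun _ : Fin K => stdGumbel)
      {g | ∀ i, i ≠ k → Real.log (p i) + g i < Real.log (p k) + g k}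
      = ENNReal.ofReal (p k) := by
  obtain _ | n := K
  · exact absurd hsum (by simp)
  have hpk := hp k
  set c : Fin (n + 1) → ℝ := fun i => Real.log (p k) - Real.log (p i) with hc
  set T : Set (ℝ × (Fin n → ℝ)) :=
    {q | ∀ j, q.2 j < q.1 + c (k.succAbove j)} with hT
  have hTm : MeasurableSet T := by
    have : T = ⋂ j, {q : ℝ × (Fin n → ℝ) | q.2 j < q.1 + c (k.succAbove j)} := by
      ext q; simp [hT]
    rw [this]
    exact MeasurableSet.iInter fun j =>
      measurableSet_lt (by fun_prop) (by fun_prop)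
  have hS : {g : Fin (n + 1) → ℝ | ∀ i, i ≠ k →
        Real.log (p i) + g i < Real.log (p k) + g k}
      = (MeasurableEquiv.piFinSuccAbove (fun _ => ℝ) k) ⁻¹' T := by
    ext g
    constructor
    · intro h j
      have hne := Fin.succAbove_ne k j
      have h2 := h _ hne
      show g (k.succAbove j) < g k + c (k.succAbove j)
      simp only [hc]
      linarith
    · intro h i hik
      obtain ⟨j, rfl⟩ := Fin.exists_succAbove_eq hik
      have h2 : g (k.succAbove j) < g k + c (k.succAbove j) := h j
      simp only [hc] at h2
      linarith
  rw [hS, (measurePreserving_piFinSuccAbove (fun _ => stdGumbel) k).measure_preimage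
    hTm.nullMeasurableSet, Measure.prod_apply hTm]
  have hslice : ∀ x : ℝ,
      (Prod.mk x ⁻¹' T) = Set.pi Set.univ (fun j => Iio (x + c (k.succAbove j))) := by
    intro x; ext h; simp [hT, Set.mem_pi]
  have key : ∀ x : ℝ,
      gf 1 x * ∏ j : Fin n, Real.exp (-Real.exp (-(x + c (k.succAbove j))))
        = gf (p k)⁻¹ x := by
    intro x
    have h1 : ∀ i, Real.exp (-(x + c i)) = Real.exp (-x) * (p i / p k) := by
      intro i
      rw [neg_add, Real.exp_add]
      congr 1
      rw [hc, show -(Real.log (p k) - Real.log (p i))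
          = Real.log (p i) - Real.log (p k) by ring,
        Real.exp_sub, Real.exp_log (hp i), Real.exp_log (hp k)]
    have h3 : ∑ j : Fin n, p (k.succAbove j) = 1 - p k := by
      have h5 := Fin.sum_univ_succAbove p k
      rw [hsum] at h5
      linarith
    have h2 : ∏ j : Fin n, Real.exp (-Real.exp (-(x + c (k.succAbove j))))
        = Real.exp (∑ j : Fin n, -(Real.exp (-x) * (p (k.succAbove j) / p k))) := by
      rw [Real.exp_sum]
      exact Finset.prod_congr rfl fun j _ => by rw [h1]
    have h4 : ∑ j : Fin n, -(Real.exp (-x) * (p (k.succAbove j) / p k))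
        = -(Real.exp (-x) / p k) * (1 - p k) := by
      have h6 : ∀ j : Fin n, -(Real.exp (-x) * (p (k.succAbove j) / p k))
          = -(Real.exp (-x) / p k) * p (k.succAbove j) := fun j => by ring
      rw [Finset.sum_congr rfl (fun j _ => h6 j), ← Finset.mul_sum, h3]
    rw [h2, h4]
    unfold gf
    rw [mul_assoc, ← Real.exp_add]
    congr 1
    field_simp
    ring
  have hmeas : Measurable fun x : ℝ => ENNReal.ofReal
      (∏ j : Fin n, Real.exp (-Real.exp (-(x + c (k.succAbove j))))) := by
    apply Measurable.ennreal_ofReal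
    apply Finset.measurable_prod
    intro j _
    fun_prop
  calc
    ∫⁻ x, (Measure.pi fun _ : Fin n => stdGumbel) (Prod.mk x ⁻¹' T) ∂stdGumbel
        = ∫⁻ x, ENNReal.ofReal (∏ j : Fin n,
            Real.exp (-Real.exp (-(x + c (k.succAbove j))))) ∂stdGumbel := by
          refine lintegral_congr fun x => ?_
          rw [hslice, Measure.pi_pi, ENNReal.ofReal_prod_of_nonneg
            (fun j _ => (Real.exp_pos _).le)]
          exact Finset.prod_congr rfl fun j _ => stdGumbel_Iio _
    _ = ∫⁻ x, ENNReal.ofReal (gf 1 x) * ENNReal.ofReal (∏ j : Fin n,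
            Real.exp (-Real.exp (-(x + c (k.succAbove j))))) ∂volume := by
          rw [stdGumbel]
          have hd : Measurable fun x : ℝ =>
              ENNReal.ofReal (Real.exp (-x) * Real.exp (-Real.exp (-x))) := by
            apply Measurable.ennreal_ofReal; fun_prop
          rw [lintegral_withDensity_eq_lintegral_mul _ hd hmeas]
          refine lintegral_congr fun x => ?_
          simp only [Pi.mul_apply, gf_one]
    _ = ∫⁻ x, ENNReal.ofReal (gf (p k)⁻¹ x) ∂volume := by
          refine lintegral_congr fun x => ?_
          rw [← ENNReal.ofReal_mul (gf_nonneg 1 x), key x]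
    _ = ENNReal.ofReal (p k) := by
          rw [← ofReal_integral_eq_lintegral_ofReal
            (gf_integrable _ (by positivity)) (ae_of_all _ (gf_nonneg _)),
            gf_integral _ (by positivity), inv_inv]
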